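/- Let n ≥ 1 and let p be a homogeneous element of degree n+1 of T (so p has zero constant term), with decomposition p = x·p_x + y·p_y. Then [x, γ(p_x)] + [y, γ(p_y)] = ((n+1)/n) · γ(p). -/

import Mathlib

noncomputable section

open scoped BigOperators

variable (K : Type) [Field K] [CharZero K]

/-- The free associative algebra `T = K⟨x,y⟩`, realized as the monoid algebra of the
free monoid on two generators. -/
abbrev T := MonoidAlgebra K (FreeMonoid (Fin 2))

/-- The word `v₁⋯vₙ` (a list of letters) as an element of `T`. -/
def word (l : List (Fin 2)) : T K := MonoidAlgebra.single (FreeMonoid.ofList l) 1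

/-- The generator `x`. -/
def X : T K := word K [0]

/-- The generator `y`. -/
def Y : T K := word K [1]

/-- Right-nested bracket `[v₁,[v₂,…,[vₙ₋₁,vₙ]…]]` of a word. -/
def brList : List (Fin 2) → T K
  | [] => 0
  | [v] => word K [v]
  | v :: rest => word K [v] * brList rest - brList rest * word K [v]

/-- The Dynkin map `γ : T → T`, sending a word `v₁⋯vₙ` to
`(1/n)[v₁,[v₂,…,[vₙ₋₁,vₙ]…]]` (and `1 ↦ 0`). -/
def dynkin : T K →ₗ[K] T K :=
  Finsupp.linearCombination K (fun w : FreeMonoid (Fin 2) =>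
    ((w.toList.length : K)⁻¹) • brList K w.toList) ∘ₗ
  (MonoidAlgebra.coeffLinearEquiv K).toLinearMap

section
attribute [local instance] LieRing.ofAssociativeRing
/-- The free Lie algebra `L` on `x, y`, as the Lie subalgebra of `T` generated by `x` and `y`. -/
def L : LieSubalgebra K (T K) := LieSubalgebra.lieSpan K (T K) {X K, Y K}
end

/-- The degree-`n` homogeneous component `T_n` of `T`, spanned by the words of length `n`. -/
def homog (n : ℕ) : Submodule K (T K) :=
  Submodule.span K { t | ∃ l : List (Fin 2), l.length = n ∧ t = word K l }

/-- The value `σ(i)` of a permutation of `{0,…,n-1}` on a natural number (junk value `0`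
outside the range). -/
def permVal {n : ℕ} (σ : Equiv.Perm (Fin n)) (i : ℕ) : ℕ :=
  if h : i < n then (σ ⟨i, h⟩ : ℕ) else 0

/-- The (0-indexed) descent set of a permutation: positions `i ∈ {0,…,n-2}` with
`σ(i) > σ(i+1)`. -/
def descSet {n : ℕ} (σ : Equiv.Perm (Fin n)) : Finset ℕ :=
  (Finset.range (n - 1)).filter fun i => permVal σ (i + 1) < permVal σ i

/-- The number of descents of a permutation. -/
def descNum {n : ℕ} (σ : Equiv.Perm (Fin n)) : ℕ := (descSet σ).card

/-- `DSet n k` is the set of permutations of `{0,…,n-1}` whose descent set is exactly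
the first `k` positions (this is `D_{1..k}` of the paper, in 0-indexed form). -/
def DSet (n k : ℕ) : Finset (Equiv.Perm (Fin n)) :=
  Finset.univ.filter fun σ => descSet σ = Finset.range k

/-- The Eulerian coefficient `c_σ = (-1)^{d(σ)} (binom (n-1) (d σ))⁻¹`. -/
def eulCoeff {n : ℕ} (σ : Equiv.Perm (Fin n)) : K :=
  (-1 : K) ^ descNum σ * ((Nat.choose (n - 1) (descNum σ) : K))⁻¹

/-- The degree-`n` Eulerian idempotent applied to the word `w₁⋯wₙ` given by
`v : Fin n → Fin 2`: `eₙ(w) = Σ_σ c_σ w^σ`. -/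
def eul (n : ℕ) (v : Fin n → Fin 2) : T K :=
  ∑ σ : Equiv.Perm (Fin n), eulCoeff K σ • word K (List.ofFn fun i => v (σ i))

/-- The `a`-part of an element of `T`: the linear map sending a word `a·w ↦ w` and
any word not starting with the letter `a` (or the empty word) to `0`.  For `p` with zero
constant term, `p = x·(letterPart 0 p) + y·(letterPart 1 p)`. -/
def letterPart (a : Fin 2) : T K →ₗ[K] T K :=
  Finsupp.linearCombination K (fun w : FreeMonoid (Fin 2) =>
    match w.toList with
    | [] => 0
    | b :: rest => if b = a then word K rest else 0)
  ∘ₗ (MonoidAlgebra.coeffLinearEquiv K).toLinearMap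

/-- The algebra endomorphism `s : T → T` with `s(x) = -y`, `s(y) = -x`. -/
def sMap : T K →ₐ[K] T K :=
  MonoidAlgebra.lift K (T K) (FreeMonoid (Fin 2))
    (FreeMonoid.lift fun a : Fin 2 => if a = 0 then -(Y K) else -(X K))



lemma single_eq (w : FreeMonoid (Fin 2)) (c : K) :
    (MonoidAlgebra.single w c : T K).coeff = Finsupp.single w c := rfl

lemma dynkin_word (l : List (Fin 2)) :
    dynkin K (word K l) = ((l.length : K)⁻¹) • brList K l := by
  unfold dynkin word
  erw [Finsupp.linearCombination_single, one_smul, FreeMonoid.toList_ofList]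

lemma letterPart_word (a b : Fin 2) (rest : List (Fin 2)) :
    letterPart K a (word K (b :: rest)) = if b = a then word K rest else 0 := by
  unfold letterPart word
  erw [Finsupp.linearCombination_single, one_smul]
  simp only [FreeMonoid.toList_ofList]

lemma brList_cons (a b : Fin 2) (rest : List (Fin 2)) :
    brList K (a :: b :: rest) = ⁅word K [a], brList K (b :: rest)⁆ := by
  rw [Ring.lie_def]; rfl

lemma lie_smul' (t : K) (a b : T K) : ⁅a, t • b⁆ = t • ⁅a, b⁆ := by
  simp [Ring.lie_def, mul_smul_comm, smul_mul_assoc, smul_sub]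

lemma lie_add' (a b c : T K) : ⁅a, b + c⁆ = ⁅a, b⁆ + ⁅a, c⁆ := by
  simp [Ring.lie_def, mul_add, add_mul]; abel

lemma lie_zero' (a : T K) : ⁅a, (0 : T K)⁆ = 0 := by
  simp [Ring.lie_def]

/-- For `p` homogeneous of degree `n + 1` (with `n ≥ 1`), with decomposition
`p = x·p_x + y·p_y`, one has `[x, γ(p_x)] + [y, γ(p_y)] = ((n+1)/n) • γ(p)`. -/
theorem stmt11 (n : ℕ) (hn : 1 ≤ n) (p : T K) (hp : p ∈ homog K (n + 1)) :
    ⁅X K, dynkin K (letterPart K 0 p)⁆ + ⁅Y K, dynkin K (letterPart K 1 p)⁆ =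
      (((n : K) + 1) / (n : K)) • dynkin K p := by
  have hn0 : (n : K) ≠ 0 := Nat.cast_ne_zero.mpr (by omega)
  have hn1 : (n : K) + 1 ≠ 0 := by
    have : ((n + 1 : ℕ) : K) ≠ 0 := Nat.cast_ne_zero.mpr (by omega)
    push_cast at this; exact this
  induction hp using Submodule.span_induction with
  | mem t ht =>
    obtain ⟨l, hl, rfl⟩ := ht
    obtain ⟨a, rest, rfl⟩ : ∃ a rest, l = a :: rest := by
      cases l with
      | nil => simp at hl
      | cons a r => exact ⟨a, r, rfl⟩
    have hlen : rest.length = n := by simpa using hl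
    obtain ⟨b, rest', rfl⟩ : ∃ b r', rest = b :: r' := by
      cases rest with
      | nil => simp at hlen; omega
      | cons b r => exact ⟨b, r, rfl⟩
    have key : ∀ c : Fin 2, ⁅word K [c], dynkin K (word K (b :: rest'))⁆ =
        (((n : K) + 1) / (n : K)) • dynkin K (word K (c :: b :: rest')) := by
      intro c
      rw [dynkin_word, dynkin_word, brList_cons, hlen, lie_smul', smul_smul]
      congr 1
      have h2 : ((c :: b :: rest').length : K) = (n : K) + 1 := by
        rw [List.length_cons, hlen]; push_cast; ring
      rw [h2]
      field_simp
    fin_cases a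
    · simp only [letterPart_word]
      rw [if_pos (by decide), if_neg (by decide), map_zero, lie_zero', add_zero]
      exact key 0
    · simp only [letterPart_word]
      rw [if_neg (by decide), if_pos (by decide), map_zero, lie_zero', zero_add]
      exact key 1
  | zero => simp [lie_zero']
  | add p q hp hq ihp ihq =>
    simp only [map_add, lie_add', smul_add]
    rw [← ihp, ← ihq]; abel
  | smul c p hp ih =>
    simp only [map_smul, lie_smul']
    rw [← smul_add, ih, smul_comm]

end
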